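/- arXiv:2503.00158 — 2 statements merged into one kernel-verified Lean document; each statement's English description precedes it below -/
import Mathlib

section
/- Let E be a real inner product space, let σ, u ∈ E, and let ξ ∈ ℝ with 0 < ξ and ‖σ‖ ≤ ξ. Then ⟪σ, u⟫ + ξ‖u‖ = 0 if and only if either u = 0, or ‖σ‖ = ξ and there exists κ > 0 such that u = -κ • σ. -/
open scoped RealInnerProductSpace

/-- Pointwise Tresca friction equivalence (Proposition 2.1). -/
theorem tresca_iff {E : Type*} [NormedAddCommGroup E] [InnerProductSpace ℝ E]
    (σ u : E) (ξ : ℝ) (hξ : 0 < ξ) (hσ : ‖σ‖ ≤ ξ) :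
    ⟪σ, u⟫ + ξ * ‖u‖ = 0 ↔
      (u = 0 ∨ (‖σ‖ = ξ ∧ ∃ κ : ℝ, 0 < κ ∧ u = -κ • σ)) := by
  constructor
  · intro h
    by_cases hu : u = 0
    · exact Or.inl hu
    right
    have hun : 0 < ‖u‖ := norm_pos_iff.mpr hu
    have hCS : ⟪σ, -u⟫ ≤ ‖σ‖ * ‖-u‖ := real_inner_le_norm σ (-u)
    have h1 : ⟪σ, -u⟫ = ξ * ‖u‖ := by
      rw [inner_neg_right]; linarith
    have hσξ : ‖σ‖ = ξ := by
      rw [norm_neg] at hCS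
      nlinarith
    have heq : ⟪σ, -u⟫ = ‖σ‖ * ‖-u‖ := by rw [norm_neg, hσξ, h1]
    rw [inner_eq_norm_mul_iff_real] at heq
    rw [norm_neg] at heq
    have h2 : ξ • u = -(‖u‖ • σ) := by
      rw [hσξ] at heq
      rw [heq]; module
    have key : u = (-(‖u‖ / ξ)) • σ := by
      apply smul_right_injective E hξ.ne'
      show ξ • u = ξ • ((-(‖u‖ / ξ)) • σ)
      rw [h2, smul_smul, show ξ * -(‖u‖ / ξ) = -‖u‖ by field_simp, neg_smul]
    exact ⟨hσξ, ‖u‖ / ξ, div_pos hun hξ, key⟩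
  · rintro (rfl | ⟨hσξ, κ, hκ, rfl⟩)
    · simp
    · have : ⟪σ, -κ • σ⟫ = -κ * ‖σ‖ ^ 2 := by
        rw [real_inner_smul_right, real_inner_self_eq_norm_sq]
      rw [this, norm_smul]
      simp only [norm_neg, Real.norm_eq_abs, abs_of_pos hκ]
      rw [hσξ]
      ring
end

section
/- Let E be a real Hilbert space, let A : E × E → ℝ be a continuous bilinear form that is coercive with constant α > 0 (i.e. A(v,v) ≥ α‖v‖² for all v ∈ E), let K ⊆ E be a convex set, and let j : E → ℝ be any function. Let L : E → ℝ and, for each n ∈ ℕ, Lₙ : E → ℝ be continuous linear functionals with Lₙ → L in operator norm. If u ∈ K satisfies A(u, v - u) + j(v) - j(u) ≥ L(v - u) for all v ∈ K, and for each n, uₙ ∈ K satisfies A(uₙ, v - uₙ) + j(v) - j(uₙ) ≥ Lₙ(v - uₙ) for all v ∈ K, then uₙ converges strongly to u in E, with ‖uₙ - u‖ ≤ ‖Lₙ - L‖/α for all n. -/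
open Filter

/-- Strong convergence of solutions of variational inequalities under convergence of the
linear functionals in operator norm. -/
theorem vi_convergence {E : Type*} [NormedAddCommGroup E] [InnerProductSpace ℝ E]
    [CompleteSpace E]
    (A : E →L[ℝ] E →L[ℝ] ℝ) (α : ℝ) (hα : 0 < α)
    (hcoer : ∀ v : E, α * ‖v‖ ^ 2 ≤ A v v)
    (K : Set E) (hK : Convex ℝ K)
    (j : E → ℝ)
    (L : E →L[ℝ] ℝ) (Ln : ℕ → E →L[ℝ] ℝ)
    (hLn : Tendsto Ln atTop (nhds L))
    (u : E) (hu : u ∈ K)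
    (hvi : ∀ v ∈ K, A u (v - u) + j v - j u ≥ L (v - u))
    (un : ℕ → E) (hun : ∀ n, un n ∈ K)
    (hvin : ∀ n, ∀ v ∈ K, A (un n) (v - un n) + j v - j (un n) ≥ Ln n (v - un n)) :
    Tendsto un atTop (nhds u) ∧ ∀ n, ‖un n - u‖ ≤ ‖Ln n - L‖ / α := by
  have key : ∀ n, ‖un n - u‖ ≤ ‖Ln n - L‖ / α := by
    intro n
    set d := un n - u with hd
    have h1 := hvi (un n) (hun n)
    have h2 := hvin n u hu
    have hneg : u - un n = -d := by simp [hd]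
    rw [hneg] at h2
    simp only [map_neg] at h2
    have hAd : A d d ≤ (Ln n - L) d := by
      have hlin : A (un n) d - A u d ≤ Ln n d - L d := by linarith
      calc A d d = A (un n) d - A u d := by rw [hd]; simp [map_sub]; ring
        _ ≤ Ln n d - L d := hlin
        _ = (Ln n - L) d := by simp
    have hb : α * ‖d‖ ^ 2 ≤ ‖Ln n - L‖ * ‖d‖ := by
      calc α * ‖d‖ ^ 2 ≤ A d d := hcoer d
        _ ≤ (Ln n - L) d := hAd
        _ ≤ ‖Ln n - L‖ * ‖d‖ := le_trans (le_abs_self _) ((Ln n - L).le_opNorm d)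
    rcases eq_or_lt_of_le (norm_nonneg d) with h0 | h0
    · rw [← h0]; positivity
    · rw [le_div_iff₀ hα]
      nlinarith [hb, h0]
  refine ⟨?_, key⟩
  have hnorm : Tendsto (fun n => ‖Ln n - L‖) atTop (nhds 0) :=
    tendsto_iff_norm_sub_tendsto_zero.mp hLn
  have hdiv : Tendsto (fun n => ‖Ln n - L‖ / α) atTop (nhds 0) := by
    simpa using hnorm.div_const α
  have := squeeze_zero (fun n => norm_nonneg _) key hdiv
  exact tendsto_iff_norm_sub_tendsto_zero.mpr this
end
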